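/- Let p, q, s be probability densities on ℝ^d and define D(p,q) = ∫∫ |p(x)q(y) − p(y)q(x)| dx dy. Then the weak triangle inequality D(p,s) + D(q,s) ≥ (2/3)·D(p,q) holds. -/

import Mathlib

open MeasureTheory

namespace SemimetricWeakAux

open ENNReal

variable {α : Type*} [MeasurableSpace α] {μ : Measure α} [SigmaFinite μ]

/-- The lintegral version of the semimetric. -/
noncomputable def L (μ : Measure α) (f g : α → ℝ) : ℝ≥0∞ :=
  ∫⁻ x, ∫⁻ y, ENNReal.ofReal |f x * g y - f y * g x| ∂μ ∂μ

lemma meas_cross {f g : α → ℝ} (hf : Measurable f) (hg : Measurable g) :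
    Measurable (fun z : α × α => ENNReal.ofReal |f z.1 * g z.2 - f z.2 * g z.1|) :=
  ENNReal.measurable_ofReal.comp
    (((hf.comp measurable_fst).mul (hg.comp measurable_snd)).sub
      ((hf.comp measurable_snd).mul (hg.comp measurable_fst))).abs

lemma inner_bound {f g : α → ℝ} (hf : Measurable f) (hg : Measurable g)
    (hf0 : ∀ x, 0 ≤ f x) (hg0 : ∀ x, 0 ≤ g x)
    (hfi : ∫⁻ x, ENNReal.ofReal (f x) ∂μ = 1) (hgi : ∫⁻ x, ENNReal.ofReal (g x) ∂μ = 1)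
    (x : α) :
    ∫⁻ y, ENNReal.ofReal |f x * g y - f y * g x| ∂μ
      ≤ ENNReal.ofReal (f x) + ENNReal.ofReal (g x) := by
  calc ∫⁻ y, ENNReal.ofReal |f x * g y - f y * g x| ∂μ
      ≤ ∫⁻ y, (ENNReal.ofReal (f x) * ENNReal.ofReal (g y)
          + ENNReal.ofReal (f y) * ENNReal.ofReal (g x)) ∂μ := by
        refine lintegral_mono fun y => ?_
        have hA : 0 ≤ f x * g y := mul_nonneg (hf0 x) (hg0 y)
        have hB : 0 ≤ f y * g x := mul_nonneg (hf0 y) (hg0 x)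
        have h1 : |f x * g y - f y * g x| ≤ f x * g y + f y * g x :=
          abs_le.mpr ⟨by linarith, by linarith⟩
        calc ENNReal.ofReal |f x * g y - f y * g x|
            ≤ ENNReal.ofReal (f x * g y + f y * g x) := ENNReal.ofReal_le_ofReal h1
          _ = _ := by
            rw [ENNReal.ofReal_add hA hB, ENNReal.ofReal_mul (hf0 x),
              ENNReal.ofReal_mul (hf0 y)]
    _ = ENNReal.ofReal (f x) * 1 + 1 * ENNReal.ofReal (g x) := by
        rw [lintegral_add_left (by fun_prop),
          lintegral_const_mul' _ _ ENNReal.ofReal_ne_top,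
          lintegral_mul_const' _ _ ENNReal.ofReal_ne_top, hfi, hgi]
    _ = _ := by simp

lemma L_le_two {f g : α → ℝ} (hf : Measurable f) (hg : Measurable g)
    (hf0 : ∀ x, 0 ≤ f x) (hg0 : ∀ x, 0 ≤ g x)
    (hfi : ∫⁻ x, ENNReal.ofReal (f x) ∂μ = 1) (hgi : ∫⁻ x, ENNReal.ofReal (g x) ∂μ = 1) :
    L μ f g ≤ 2 := by
  calc L μ f g ≤ ∫⁻ x, (ENNReal.ofReal (f x) + ENNReal.ofReal (g x)) ∂μ :=
        lintegral_mono (inner_bound hf hg hf0 hg0 hfi hgi)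
    _ = 1 + 1 := by rw [lintegral_add_left (by fun_prop), hfi, hgi]
    _ = 2 := by norm_num

lemma core {p q s : α → ℝ} (hp : Measurable p) (hq : Measurable q) (hs : Measurable s)
    (hp0 : ∀ x, 0 ≤ p x) (hq0 : ∀ x, 0 ≤ q x) (hs0 : ∀ x, 0 ≤ s x)
    (hpi : ∫⁻ x, ENNReal.ofReal (p x) ∂μ = 1) (hqi : ∫⁻ x, ENNReal.ofReal (q x) ∂μ = 1)
    (hsi : ∫⁻ x, ENNReal.ofReal (s x) ∂μ = 1) :
    L μ p q ≤ 2 * L μ p s + L μ q s := by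
  set G : α → ℝ≥0∞ := fun x => ∫⁻ z, ENNReal.ofReal |p x * s z - p z * s x| ∂μ with hGdef
  have hGmeas : Measurable G := (meas_cross hp hs).lintegral_prod_right'
  -- key pointwise-in-(x,y) bound after integrating out z
  have key : ∀ x y, ENNReal.ofReal |p x * q y - p y * q x|
      ≤ ENNReal.ofReal (q y) * G x + ENNReal.ofReal |q x * s y - q y * s x|
        + ENNReal.ofReal (q x) * G y := by
    intro x y
    have step1 : ENNReal.ofReal |p x * q y - p y * q x|
        = ∫⁻ z, ENNReal.ofReal |p x * q y - p y * q x| * ENNReal.ofReal (s z) ∂μ := by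
      rw [lintegral_const_mul' _ _ ENNReal.ofReal_ne_top, hsi, mul_one]
    rw [step1]
    have step2 : ∫⁻ z, ENNReal.ofReal |p x * q y - p y * q x| * ENNReal.ofReal (s z) ∂μ
        ≤ ∫⁻ z, (ENNReal.ofReal (q y) * ENNReal.ofReal |p x * s z - p z * s x|
            + ENNReal.ofReal (p z) * ENNReal.ofReal |q x * s y - q y * s x|
            + ENNReal.ofReal (q x) * ENNReal.ofReal |p y * s z - p z * s y|) ∂μ := by
      refine lintegral_mono fun z => ?_
      have hid : (p x * q y - p y * q x) * s z
          = q y * (p x * s z - p z * s x) - p z * (q x * s y - q y * s x)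
            - q x * (p y * s z - p z * s y) := by ring
      calc ENNReal.ofReal |p x * q y - p y * q x| * ENNReal.ofReal (s z)
          = ENNReal.ofReal (|p x * q y - p y * q x| * s z) :=
            (ENNReal.ofReal_mul (abs_nonneg _)).symm
        _ = ENNReal.ofReal |(p x * q y - p y * q x) * s z| := by
            rw [abs_mul, abs_of_nonneg (hs0 z)]
        _ ≤ ENNReal.ofReal (q y * |p x * s z - p z * s x|
              + p z * |q x * s y - q y * s x| + q x * |p y * s z - p z * s y|) := by
            refine ENNReal.ofReal_le_ofReal ?_
            rw [hid]
            calc |q y * (p x * s z - p z * s x) - p z * (q x * s y - q y * s x)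
                  - q x * (p y * s z - p z * s y)|
                ≤ |q y * (p x * s z - p z * s x) - p z * (q x * s y - q y * s x)|
                  + |q x * (p y * s z - p z * s y)| := abs_sub _ _
              _ ≤ |q y * (p x * s z - p z * s x)| + |p z * (q x * s y - q y * s x)|
                  + |q x * (p y * s z - p z * s y)| :=
                  add_le_add (abs_sub _ _) le_rfl
              _ = _ := by
                  rw [abs_mul, abs_mul, abs_mul, abs_of_nonneg (hq0 y),
                    abs_of_nonneg (hp0 z), abs_of_nonneg (hq0 x)]
        _ = _ := by
            rw [ENNReal.ofReal_add
                (add_nonneg (mul_nonneg (hq0 y) (abs_nonneg _)) (mul_nonneg (hp0 z) (abs_nonneg _)))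
                (mul_nonneg (hq0 x) (abs_nonneg _)),
              ENNReal.ofReal_add (mul_nonneg (hq0 y) (abs_nonneg _)) (mul_nonneg (hp0 z) (abs_nonneg _)),
              ENNReal.ofReal_mul (hq0 y), ENNReal.ofReal_mul (hp0 z),
              ENNReal.ofReal_mul (hq0 x)]
    refine step2.trans (le_of_eq ?_)
    rw [lintegral_add_right _ (by fun_prop), lintegral_add_left (by fun_prop),
      lintegral_const_mul' _ _ ENNReal.ofReal_ne_top,
      lintegral_mul_const' _ _ ENNReal.ofReal_ne_top,
      lintegral_const_mul' _ _ ENNReal.ofReal_ne_top, hpi, one_mul]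
  -- now integrate the key bound over y then x
  calc L μ p q ≤ ∫⁻ x, ∫⁻ y, (ENNReal.ofReal (q y) * G x
        + ENNReal.ofReal |q x * s y - q y * s x| + ENNReal.ofReal (q x) * G y) ∂μ ∂μ :=
      lintegral_mono fun x => lintegral_mono fun y => key x y
    _ = ∫⁻ x, (G x + (∫⁻ y, ENNReal.ofReal |q x * s y - q y * s x| ∂μ)
        + ENNReal.ofReal (q x) * L μ p s) ∂μ := by
      refine lintegral_congr fun x => ?_
      rw [lintegral_add_right _ (by fun_prop),
        lintegral_add_right _ (by fun_prop),
        lintegral_mul_const'' _ (by fun_prop),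
        lintegral_const_mul'' _ hGmeas.aemeasurable, hqi, one_mul]
      rfl
    _ = L μ p s + L μ q s + 1 * L μ p s := by
      rw [lintegral_add_right _ (by fun_prop),
        lintegral_add_right _ ((meas_cross hq hs).lintegral_prod_right'),
        lintegral_mul_const'' _ (by fun_prop), hqi]
      rfl
    _ = 2 * L μ p s + L μ q s := by ring

lemma L_symm (p q : α → ℝ) : L μ q p = L μ p q := by
  refine lintegral_congr fun x => lintegral_congr fun y => ?_
  rw [mul_comm (q x), mul_comm (q y), abs_sub_comm]

lemma lintegral_ofReal_eq_one {f : α → ℝ} (hf0 : ∀ x, 0 ≤ f x) (hfi : ∫ x, f x ∂μ = 1) :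
    ∫⁻ x, ENNReal.ofReal (f x) ∂μ = 1 := by
  have hint : Integrable f μ := integrable_of_integral_eq_one hfi
  rw [← ofReal_integral_eq_lintegral_ofReal hint (ae_of_all _ hf0), hfi, ENNReal.ofReal_one]

lemma L_toReal {f g : α → ℝ} (hf : Measurable f) (hg : Measurable g)
    (hf0 : ∀ x, 0 ≤ f x) (hg0 : ∀ x, 0 ≤ g x)
    (hfi : ∫⁻ x, ENNReal.ofReal (f x) ∂μ = 1) (hgi : ∫⁻ x, ENNReal.ofReal (g x) ∂μ = 1) :
    (∫ x, ∫ y, |f x * g y - f y * g x| ∂μ ∂μ) = (L μ f g).toReal := by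
  set I : α → ℝ≥0∞ := fun x => ∫⁻ y, ENNReal.ofReal |f x * g y - f y * g x| ∂μ with hIdef
  have hImeas : Measurable I := (meas_cross hf hg).lintegral_prod_right'
  have hIfin : ∀ x, I x ≠ ∞ := fun x =>
    ((inner_bound hf hg hf0 hg0 hfi hgi x).trans_lt (by finiteness)).ne
  have hin : ∀ x, (∫ y, |f x * g y - f y * g x| ∂μ) = (I x).toReal := fun x =>
    integral_eq_lintegral_of_nonneg_ae (ae_of_all _ fun y => abs_nonneg _)
      (((hf.comp measurable_const).mul hg).sub (hf.mul (hg.comp measurable_const))).abs.aestronglyMeasurable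
  simp only [hin]
  rw [integral_eq_lintegral_of_nonneg_ae (ae_of_all _ fun x => ENNReal.toReal_nonneg)
    hImeas.ennreal_toReal.aestronglyMeasurable]
  congr 1
  exact lintegral_congr fun x => ENNReal.ofReal_toReal (hIfin x)

end SemimetricWeakAux

/-- The weak triangle inequality for the semimetric
`D(p,q) = ∫∫ |p(x)q(y) − p(y)q(x)| dx dy`: for probability densities `p, q, s`,
`D(p,s) + D(q,s) ≥ (2/3)·D(p,q)`. -/
theorem semimetric_weak_triangle
    {d : ℕ} (p q s : (Fin d → ℝ) → ℝ)
    (hp_meas : Measurable p) (hq_meas : Measurable q) (hs_meas : Measurable s)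
    (hp_nonneg : ∀ x, 0 ≤ p x) (hq_nonneg : ∀ x, 0 ≤ q x) (hs_nonneg : ∀ x, 0 ≤ s x)
    (hp_int : ∫ x, p x = 1) (hq_int : ∫ x, q x = 1) (hs_int : ∫ x, s x = 1) :
    (∫ x, ∫ y, |p x * s y - p y * s x|) + (∫ x, ∫ y, |q x * s y - q y * s x|) ≥
      (2 / 3) * ∫ x, ∫ y, |p x * q y - p y * q x| := by
  open SemimetricWeakAux in
  have hpi := lintegral_ofReal_eq_one hp_nonneg hp_int
  have hqi := lintegral_ofReal_eq_one hq_nonneg hq_int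
  have hsi := lintegral_ofReal_eq_one hs_nonneg hs_int
  set μ : Measure (Fin d → ℝ) := volume with hμ
  set a := L μ p s with ha
  set b := L μ q s with hb
  set c := L μ p q with hc
  have ha2 : a ≤ 2 := L_le_two hp_meas hs_meas hp_nonneg hs_nonneg hpi hsi
  have hb2 : b ≤ 2 := L_le_two hq_meas hs_meas hq_nonneg hs_nonneg hqi hsi
  have hc2 : c ≤ 2 := L_le_two hp_meas hq_meas hp_nonneg hq_nonneg hpi hqi
  have h1 : c ≤ 2 * a + b := core hp_meas hq_meas hs_meas hp_nonneg hq_nonneg hs_nonneg hpi hqi hsi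
  have h2 : c ≤ 2 * b + a := by
    have := core hq_meas hp_meas hs_meas hq_nonneg hp_nonneg hs_nonneg hqi hpi hsi
    rwa [L_symm p q] at this
  have hsum : 2 * c ≤ 3 * a + 3 * b := by
    calc 2 * c = c + c := two_mul c
      _ ≤ (2 * a + b) + (2 * b + a) := add_le_add h1 h2
      _ = 3 * a + 3 * b := by ring
  have hane : a ≠ ⊤ := (ha2.trans_lt (by norm_num)).ne
  have hbne : b ≠ ⊤ := (hb2.trans_lt (by norm_num)).ne
  have hcne : c ≠ ⊤ := (hc2.trans_lt (by norm_num)).ne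
  have hreal : 2 * c.toReal ≤ 3 * a.toReal + 3 * b.toReal := by
    have := ENNReal.toReal_mono (by finiteness) hsum
    rw [ENNReal.toReal_mul, ENNReal.toReal_add (by finiteness) (by finiteness),
      ENNReal.toReal_mul, ENNReal.toReal_mul] at this
    simpa using this
  have e1 : (∫ x, ∫ y, |p x * s y - p y * s x|) = a.toReal :=
    L_toReal hp_meas hs_meas hp_nonneg hs_nonneg hpi hsi
  have e2 : (∫ x, ∫ y, |q x * s y - q y * s x|) = b.toReal :=
    L_toReal hq_meas hs_meas hq_nonneg hs_nonneg hqi hsi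
  have e3 : (∫ x, ∫ y, |p x * q y - p y * q x|) = c.toReal :=
    L_toReal hp_meas hq_meas hp_nonneg hq_nonneg hpi hqi
  rw [e1, e2, e3]
  linarith
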